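/- It holds that (1/(2√π)) · ∫_{−∞}^{∞} exp(−u²/4) · (2 + u²) · log(u²) du = 4·(1 − γ), where γ is the Euler–Mascheroni constant. -/

import Mathlib

open Real MeasureTheory Set Filter

local notation "γ" => Real.eulerMascheroniConstant

-- derivative of Gamma as an integral
lemma hasDerivAt_Gamma_integral {s : ℝ} (hs : 0 < s) :
    HasDerivAt Real.Gamma (∫ t in Ioi (0:ℝ), Real.exp (-t) * t ^ (s - 1) * Real.log t) s := by
  have hO : IsOpen {z : ℂ | 0 < z.re} := isOpen_lt continuous_const Complex.continuous_re
  have hmem : {z : ℂ | 0 < z.re} ∈ nhds (s : ℂ) := hO.mem_nhds (by simpa using hs)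
  have h1 : HasDerivAt Complex.Gamma
      (∫ t in Ioi (0:ℝ), (t:ℂ) ^ ((s:ℂ) - 1) * (Real.log t * Real.exp (-t))) (s : ℂ) := by
    refine (Complex.hasDerivAt_GammaIntegral (by simpa using hs)).congr_of_eventuallyEq ?_
    filter_upwards [hmem] with z hz
    exact Complex.Gamma_eq_integral hz
  have h2 : (∫ t in Ioi (0:ℝ), (t:ℂ) ^ ((s:ℂ) - 1) * (Real.log t * Real.exp (-t)))
      = ((∫ t in Ioi (0:ℝ), Real.exp (-t) * t ^ (s - 1) * Real.log t : ℝ) : ℂ) := by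
    rw [show ((∫ t in Ioi (0:ℝ), Real.exp (-t) * t ^ (s - 1) * Real.log t : ℝ) : ℂ)
        = ∫ t in Ioi (0:ℝ), ((Real.exp (-t) * t ^ (s - 1) * Real.log t : ℝ) : ℂ)
        from (integral_ofReal).symm]
    refine setIntegral_congr_fun measurableSet_Ioi fun t ht => ?_
    have ht' : (0:ℝ) < t := ht
    rw [show ((s:ℂ) - 1) = ((s - 1 : ℝ) : ℂ) by push_cast; ring, ← Complex.ofReal_cpow ht'.le]
    push_cast
    ring
  rw [h2] at h1
  have h3 := h1.real_of_complex
  refine h3.congr_of_eventuallyEq ?_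
  filter_upwards with x
  rw [Complex.Gamma_ofReal, Complex.ofReal_re]

lemma J_half : ∫ t in Ioi (0:ℝ), Real.exp (-t) * t ^ ((1:ℝ)/2 - 1) * Real.log t
    = -Real.sqrt π * (γ + 2 * Real.log 2) :=
  (hasDerivAt_Gamma_integral (by norm_num)).unique Real.hasDerivAt_Gamma_one_half

lemma J_three_half : ∫ t in Ioi (0:ℝ), Real.exp (-t) * t ^ ((3:ℝ)/2 - 1) * Real.log t
    = Real.sqrt π + (1/2) * (-Real.sqrt π * (γ + 2 * Real.log 2)) := by
  have hmul : HasDerivAt (fun s : ℝ => s * Real.Gamma s)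
      (1 * Real.Gamma (1/2) + (1/2) * (-Real.sqrt π * (γ + 2 * Real.log 2))) (1/2) :=
    (hasDerivAt_id _).mul Real.hasDerivAt_Gamma_one_half
  have hcongr : (fun s : ℝ => Real.Gamma (s + 1)) =ᶠ[nhds (1/2 : ℝ)] fun s => s * Real.Gamma s := by
    filter_upwards [eventually_gt_nhds (by norm_num : (0:ℝ) < 1/2)] with s hs
    exact Real.Gamma_add_one hs.ne'
  have h1 : HasDerivAt (fun s : ℝ => Real.Gamma (s + 1))
      (1 * Real.Gamma (1/2) + (1/2) * (-Real.sqrt π * (γ + 2 * Real.log 2))) (1/2) :=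
    hmul.congr_of_eventuallyEq hcongr
  have h32 := hasDerivAt_Gamma_integral (by norm_num : (0:ℝ) < 3/2)
  have h2 : HasDerivAt (fun s : ℝ => Real.Gamma (s + 1))
      ((∫ t in Ioi (0:ℝ), Real.exp (-t) * t ^ ((3:ℝ)/2 - 1) * Real.log t) * 1) (1/2) := by
    have := HasDerivAt.comp (1/2 : ℝ)
      (show HasDerivAt Real.Gamma _ ((1:ℝ)/2 + 1) by norm_num; exact h32)
      ((hasDerivAt_id ((1:ℝ)/2)).add_const 1)
    exact this
  have := h2.unique h1
  rw [mul_one] at this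
  rw [this, Real.Gamma_one_half_eq, one_mul]

-- substitution t = x^2 on (0, ∞)
lemma integral_comp_sq_Ioi (g : ℝ → ℝ) :
    ∫ x in Ioi (0:ℝ), 2 * x * g (x ^ 2) = ∫ t in Ioi (0:ℝ), g t := by
  rw [← integral_comp_rpow_Ioi g (p := 2) two_ne_zero]
  refine setIntegral_congr_fun measurableSet_Ioi fun x hx => ?_
  rw [smul_eq_mul, abs_two, show (2:ℝ) - 1 = 1 by norm_num, rpow_one,
    show x ^ (2:ℝ) = x ^ 2 by rw [← rpow_natCast x 2]; norm_num]

lemma sq_rpow_key {x : ℝ} (hx : 0 < x) (e : ℝ) : ((x:ℝ) ^ 2) ^ e = x ^ (2 * e) := by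
  rw [← rpow_natCast x 2, ← rpow_mul hx.le]
  norm_num

lemma P0 : ∫ x in Ioi (0:ℝ), Real.exp (-x^2) = Real.sqrt π / 2 := by
  have h1 := integral_comp_sq_Ioi (fun t => Real.exp (-t) * t ^ ((1:ℝ)/2 - 1))
  rw [← Real.Gamma_eq_integral (by norm_num : (0:ℝ) < 1/2), Real.Gamma_one_half_eq] at h1
  have h2 : (∫ x in Ioi (0:ℝ), 2 * x * (Real.exp (-(x^2)) * (x^2) ^ ((1:ℝ)/2 - 1)))
      = ∫ x in Ioi (0:ℝ), 2 * Real.exp (-x^2) := by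
    refine setIntegral_congr_fun measurableSet_Ioi fun x hx => ?_
    have hx' : (0:ℝ) < x := hx
    rw [sq_rpow_key hx', show (2:ℝ) * ((1:ℝ)/2 - 1) = -1 by norm_num, rpow_neg_one]
    field_simp
  rw [h2, integral_const_mul] at h1
  linarith

lemma P2 : ∫ x in Ioi (0:ℝ), Real.exp (-x^2) * x^2 = Real.sqrt π / 4 := by
  have h1 := integral_comp_sq_Ioi (fun t => Real.exp (-t) * t ^ ((3:ℝ)/2 - 1))
  rw [← Real.Gamma_eq_integral (by norm_num : (0:ℝ) < 3/2),
    show Real.Gamma ((3:ℝ)/2) = Real.sqrt π / 2 by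
      rw [show (3:ℝ)/2 = 1/2 + 1 by norm_num, Real.Gamma_add_one (by norm_num),
        Real.Gamma_one_half_eq]; ring] at h1
  have h2 : (∫ x in Ioi (0:ℝ), 2 * x * (Real.exp (-(x^2)) * (x^2) ^ ((3:ℝ)/2 - 1)))
      = ∫ x in Ioi (0:ℝ), 2 * (Real.exp (-x^2) * x^2) := by
    refine setIntegral_congr_fun measurableSet_Ioi fun x hx => ?_
    have hx' : (0:ℝ) < x := hx
    rw [sq_rpow_key hx', show (2:ℝ) * ((3:ℝ)/2 - 1) = 1 by norm_num, rpow_one]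
    ring
  rw [h2, integral_const_mul] at h1
  linarith

lemma L0 : ∫ x in Ioi (0:ℝ), Real.exp (-x^2) * Real.log x
    = (-Real.sqrt π * (γ + 2 * Real.log 2)) / 4 := by
  have h1 := integral_comp_sq_Ioi (fun t => Real.exp (-t) * t ^ ((1:ℝ)/2 - 1) * Real.log t)
  rw [J_half] at h1
  have h2 : (∫ x in Ioi (0:ℝ),
        2 * x * (Real.exp (-(x^2)) * (x^2) ^ ((1:ℝ)/2 - 1) * Real.log (x^2)))
      = ∫ x in Ioi (0:ℝ), 4 * (Real.exp (-x^2) * Real.log x) := by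
    refine setIntegral_congr_fun measurableSet_Ioi fun x hx => ?_
    have hx' : (0:ℝ) < x := hx
    rw [sq_rpow_key hx', show (2:ℝ) * ((1:ℝ)/2 - 1) = -1 by norm_num, rpow_neg_one,
      Real.log_pow]
    field_simp
    ring
  rw [h2, integral_const_mul] at h1
  linarith

lemma L2 : ∫ x in Ioi (0:ℝ), Real.exp (-x^2) * x^2 * Real.log x
    = (Real.sqrt π + (1/2) * (-Real.sqrt π * (γ + 2 * Real.log 2))) / 4 := by
  have h1 := integral_comp_sq_Ioi (fun t => Real.exp (-t) * t ^ ((3:ℝ)/2 - 1) * Real.log t)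
  rw [J_three_half] at h1
  have h2 : (∫ x in Ioi (0:ℝ),
        2 * x * (Real.exp (-(x^2)) * (x^2) ^ ((3:ℝ)/2 - 1) * Real.log (x^2)))
      = ∫ x in Ioi (0:ℝ), 4 * (Real.exp (-x^2) * x^2 * Real.log x) := by
    refine setIntegral_congr_fun measurableSet_Ioi fun x hx => ?_
    have hx' : (0:ℝ) < x := hx
    rw [sq_rpow_key hx', show (2:ℝ) * ((3:ℝ)/2 - 1) = 1 by norm_num, rpow_one, Real.log_pow]
    ring
  rw [h2, integral_const_mul] at h1
  linarith

lemma abs_log_le' {x : ℝ} (hx : 0 < x) :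
    |Real.log x| ≤ 2 * x ^ ((1:ℝ)/2) + 2 * x ^ (-((1:ℝ)/2)) := by
  have h1 : Real.log x ≤ 2 * x ^ ((1:ℝ)/2) := by
    have h := Real.log_le_rpow_div hx.le (by norm_num : (0:ℝ) < 1/2)
    calc Real.log x ≤ x ^ ((1:ℝ)/2) / (1/2) := h
    _ = 2 * x ^ ((1:ℝ)/2) := by ring
  have h2 : -Real.log x ≤ 2 * x ^ (-((1:ℝ)/2)) := by
    rw [← Real.log_inv]
    have h := Real.log_le_rpow_div (inv_nonneg.mpr hx.le) (by norm_num : (0:ℝ) < 1/2)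
    calc Real.log x⁻¹ ≤ (x⁻¹) ^ ((1:ℝ)/2) / (1/2) := h
    _ = 2 * x ^ (-((1:ℝ)/2)) := by
        rw [Real.inv_rpow hx.le, ← Real.rpow_neg hx.le]; ring
  have p1 : (0:ℝ) ≤ 2 * x ^ ((1:ℝ)/2) := by positivity
  have p2 : (0:ℝ) ≤ 2 * x ^ (-((1:ℝ)/2)) := by positivity
  rcases abs_cases (Real.log x) with ⟨h, _⟩ | ⟨h, _⟩ <;> rw [h] <;> linarith

lemma intOn_log (k : ℕ) :
    IntegrableOn (fun x : ℝ => Real.exp (-x^2) * x^k * Real.log x) (Ioi 0) := by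
  have i1 := integrableOn_rpow_mul_exp_neg_mul_sq (b := 1) one_pos
    (s := (k:ℝ) + 1/2) (by linarith [Nat.cast_nonneg (α := ℝ) k])
  have i2 := integrableOn_rpow_mul_exp_neg_mul_sq (b := 1) one_pos
    (s := (k:ℝ) - 1/2) (by linarith [Nat.cast_nonneg (α := ℝ) k])
  simp only [neg_mul, one_mul] at i1 i2
  have hdom : IntegrableOn (fun x : ℝ =>
      2 * (x ^ ((k:ℝ) + 1/2) * Real.exp (-x^2)) + 2 * (x ^ ((k:ℝ) - 1/2) * Real.exp (-x^2)))
      (Ioi 0) := (i1.const_mul 2).add (i2.const_mul 2)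
  refine hdom.mono' ?_ ?_
  · refine ContinuousOn.aestronglyMeasurable ?_ measurableSet_Ioi
    refine ContinuousOn.mul (ContinuousOn.mul (by fun_prop) (by fun_prop)) ?_
    exact Real.continuousOn_log.mono fun x hx => ne_of_gt hx
  · filter_upwards [ae_restrict_mem measurableSet_Ioi] with x hx
    have hx' : (0:ℝ) < x := hx
    have hb := abs_log_le' hx'
    calc ‖Real.exp (-x^2) * x^k * Real.log x‖
        = Real.exp (-x^2) * x^k * |Real.log x| := by
          rw [norm_mul, norm_mul, Real.norm_eq_abs, Real.norm_eq_abs, Real.norm_eq_abs,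
            abs_of_pos (Real.exp_pos _), abs_of_pos (pow_pos hx' k)]
    _ ≤ Real.exp (-x^2) * x^k * (2 * x ^ ((1:ℝ)/2) + 2 * x ^ (-((1:ℝ)/2))) := by
          exact mul_le_mul_of_nonneg_left hb (by positivity)
    _ = 2 * (x ^ ((k:ℝ) + 1/2) * Real.exp (-x^2))
        + 2 * (x ^ ((k:ℝ) - 1/2) * Real.exp (-x^2)) := by
          rw [show (k:ℝ) + 1/2 = (k:ℝ) + (1/2) from rfl, Real.rpow_add hx',
            show (k:ℝ) - 1/2 = (k:ℝ) + (-(1/2)) by ring, Real.rpow_add hx',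
            Real.rpow_natCast, show -((1:ℝ)/2) = (-(1/2):ℝ) by norm_num]
          ring

lemma intOn_exp : IntegrableOn (fun x : ℝ => Real.exp (-x^2)) (Ioi 0) := by
  have := integrableOn_rpow_mul_exp_neg_mul_sq (b := 1) one_pos (s := 0) (by norm_num)
  simpa [neg_mul, one_mul, Real.rpow_zero] using this

lemma intOn_x2exp : IntegrableOn (fun x : ℝ => Real.exp (-x^2) * x^2) (Ioi 0) := by
  have := integrableOn_rpow_mul_exp_neg_mul_sq (b := 1) one_pos (s := 2) (by norm_num)
  have h2 : ∀ x : ℝ, x ^ (2:ℝ) = x ^ 2 := fun x => by rw [← Real.rpow_natCast x 2]; norm_num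
  simp only [neg_mul, one_mul, h2] at this
  exact this.congr_fun (fun x _ => mul_comm _ _) measurableSet_Ioi

lemma Ioi_value :
    ∫ x in Ioi (0:ℝ), Real.exp (-x^2/4) * (2 + x^2) * Real.log (x^2)
      = 4 * Real.sqrt π * (1 - γ) := by
  have hscale := integral_comp_mul_left_Ioi
    (fun u : ℝ => Real.exp (-u^2/4) * (2 + u^2) * Real.log (u^2)) 0
    (by norm_num : (0:ℝ) < 2)
  rw [mul_zero, smul_eq_mul] at hscale
  -- hscale : ∫ x in Ioi 0, f (2x) = 2⁻¹ * ∫ x in Ioi 0, f x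
  have hpt : (∫ x in Ioi (0:ℝ),
        Real.exp (-(2*x)^2/4) * (2 + (2*x)^2) * Real.log ((2*x)^2))
      = ∫ x in Ioi (0:ℝ),
        ((4 * Real.log 2) * Real.exp (-x^2) + (8 * Real.log 2) * (Real.exp (-x^2) * x^2)
          + 4 * (Real.exp (-x^2) * Real.log x) + 8 * (Real.exp (-x^2) * x^2 * Real.log x)) := by
    refine setIntegral_congr_fun measurableSet_Ioi fun x hx => ?_
    have hx' : (0:ℝ) < x := hx
    rw [show -(2*x)^2/4 = -x^2 by ring, Real.log_pow,
      Real.log_mul two_ne_zero hx'.ne']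
    push_cast
    ring
  have I1 : IntegrableOn (fun x : ℝ => (4 * Real.log 2) * Real.exp (-x^2)) (Ioi 0) :=
    intOn_exp.const_mul _
  have I2 : IntegrableOn (fun x : ℝ => (8 * Real.log 2) * (Real.exp (-x^2) * x^2)) (Ioi 0) :=
    intOn_x2exp.const_mul _
  have I3 : IntegrableOn (fun x : ℝ => 4 * (Real.exp (-x^2) * Real.log x)) (Ioi 0) := by
    have := (intOn_log 0).const_mul 4
    simpa [IntegrableOn] using this
  have I4 : IntegrableOn (fun x : ℝ => 8 * (Real.exp (-x^2) * x^2 * Real.log x)) (Ioi 0) :=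
    (intOn_log 2).const_mul 8
  have hsplit : (∫ x in Ioi (0:ℝ),
        ((4 * Real.log 2) * Real.exp (-x^2) + (8 * Real.log 2) * (Real.exp (-x^2) * x^2)
          + 4 * (Real.exp (-x^2) * Real.log x) + 8 * (Real.exp (-x^2) * x^2 * Real.log x)))
      = (4 * Real.log 2) * (Real.sqrt π / 2) + (8 * Real.log 2) * (Real.sqrt π / 4)
        + 4 * ((-Real.sqrt π * (γ + 2 * Real.log 2)) / 4)
        + 8 * ((Real.sqrt π + (1/2) * (-Real.sqrt π * (γ + 2 * Real.log 2))) / 4) := by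
    have I12 : IntegrableOn (fun x : ℝ => (4 * Real.log 2) * Real.exp (-x^2)
        + (8 * Real.log 2) * (Real.exp (-x^2) * x^2)) (Ioi 0) := by exact I1.add I2
    have I123 : IntegrableOn (fun x : ℝ => (4 * Real.log 2) * Real.exp (-x^2)
        + (8 * Real.log 2) * (Real.exp (-x^2) * x^2)
        + 4 * (Real.exp (-x^2) * Real.log x)) (Ioi 0) := by exact I12.add I3
    rw [integral_add I123 I4, integral_add I12 I3, integral_add I1 I2]
    rw [integral_const_mul, integral_const_mul, integral_const_mul, integral_const_mul,
      P0, P2, L0, L2]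
  rw [hpt, hsplit] at hscale
  have hγ := Real.eulerMascheroniConstant
  nlinarith [hscale, Real.sq_sqrt Real.pi_pos.le]

/-- The one-dimensional Gaussian–logarithm integral evaluating to `4(1 − γ)`. -/
theorem gaussian_log_integral_one_dim :
    (1 / (2 * Real.sqrt π)) *
      ∫ u : ℝ, Real.exp (-u ^ 2 / 4) * (2 + u ^ 2) * Real.log (u ^ 2) =
    4 * (1 - Real.eulerMascheroniConstant) := by
  have habs := integral_comp_abs
    (f := fun x : ℝ => Real.exp (-x^2/4) * (2 + x^2) * Real.log (x^2))
  have heq : (∫ u : ℝ, Real.exp (-u ^ 2 / 4) * (2 + u ^ 2) * Real.log (u ^ 2))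
      = ∫ u : ℝ, Real.exp (-|u|^2/4) * (2 + |u|^2) * Real.log (|u|^2) := by
    simp only [sq_abs]
  rw [heq, habs, Ioi_value]
  have hπ : Real.sqrt π ≠ 0 := ne_of_gt (Real.sqrt_pos.mpr Real.pi_pos)
  field_simp
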